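/- For the B(t) quantum random walk with 0 < t < 1, the common zero set on the unit torus of H and ∇H, where H = 2xy(z⁴+1) − (x+y+xy²+x²y)(z³+z)√(2t) + (4txy + x² + x²y² + 1 + y²)z², consists of exactly the four points (x,y,z) = ±(1, 1, √(t/2) ± i√(1−t/2)). -/

import Mathlib

private lemma deriv_quadC (A B C v : ℂ) :
    deriv (fun w : ℂ => A*w^2 + B*w + C) v = 2*A*v + B := by
  have h := ((hasDerivAt_pow 2 v).const_mul A).add
    (((hasDerivAt_pow 1 v).const_mul B).add_const C)
  have h2 : (fun w : ℂ => A*w^2 + B*w + C)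
      = (fun y : ℂ => A * y ^ 2 + (B * y ^ 1 + C)) := by
    funext w; ring
  rw [h2]; erw [h.deriv]; push_cast; ring

private lemma deriv_quartC (A B C D E v : ℂ) :
    deriv (fun w : ℂ => A*w^4 + B*w^3 + C*w^2 + D*w + E) v
      = 4*A*v^3 + 3*B*v^2 + 2*C*v + D := by
  have h := ((hasDerivAt_pow 4 v).const_mul A).add
    (((hasDerivAt_pow 3 v).const_mul B).add
      (((hasDerivAt_pow 2 v).const_mul C).add
        (((hasDerivAt_pow 1 v).const_mul D).add_const E)))
  have h2 : (fun w : ℂ => A*w^4 + B*w^3 + C*w^2 + D*w + E)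
      = (fun y : ℂ => A * y ^ 4 + (B * y ^ 3 + (C * y ^ 2 + (D * y ^ 1 + E)))) := by
    funext w; ring
  rw [h2]; erw [h.deriv]; push_cast; ring

/-- The denominator polynomial of the B(t) quantum random walk (denominators cleared). -/
noncomputable def HB (t : ℝ) (x y z : ℂ) : ℂ :=
  2 * x * y * (z ^ 4 + 1) -
    (x + y + x * y ^ 2 + x ^ 2 * y) * (z ^ 3 + z) * (Real.sqrt (2 * t) : ℂ) +
    (4 * (t : ℂ) * x * y + x ^ 2 + x ^ 2 * y ^ 2 + 1 + y ^ 2) * z ^ 2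

private lemma HB_deriv_x (t : ℝ) (x y z : ℂ) :
    deriv (fun w => HB t w y z) x =
      2*y*(z^4+1) - (1 + y^2 + 2*x*y)*(z^3+z)*(Real.sqrt (2*t) : ℂ)
        + (4*(t:ℂ)*y + 2*x + 2*x*y^2)*z^2 := by
  have h2 : (fun w => HB t w y z)
      = (fun w : ℂ => (-(y*(z^3+z)*(Real.sqrt (2*t):ℂ)) + (1+y^2)*z^2)*w^2
          + (2*y*(z^4+1) - (1+y^2)*(z^3+z)*(Real.sqrt (2*t):ℂ) + 4*(t:ℂ)*y*z^2)*w
          + (-(y*(z^3+z)*(Real.sqrt (2*t):ℂ)) + (1+y^2)*z^2)) := by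
    funext w; simp only [HB]; ring
  rw [h2, deriv_quadC]; ring

private lemma HB_deriv_y (t : ℝ) (x y z : ℂ) :
    deriv (fun w => HB t x w z) y =
      2*x*(z^4+1) - (1 + x^2 + 2*x*y)*(z^3+z)*(Real.sqrt (2*t) : ℂ)
        + (4*(t:ℂ)*x + 2*y + 2*x^2*y)*z^2 := by
  have h2 : (fun w => HB t x w z)
      = (fun w : ℂ => (-(x*(z^3+z)*(Real.sqrt (2*t):ℂ)) + (1+x^2)*z^2)*w^2
          + (2*x*(z^4+1) - (1+x^2)*(z^3+z)*(Real.sqrt (2*t):ℂ) + 4*(t:ℂ)*x*z^2)*w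
          + (-(x*(z^3+z)*(Real.sqrt (2*t):ℂ)) + (1+x^2)*z^2)) := by
    funext w; simp only [HB]; ring
  rw [h2, deriv_quadC]; ring

private lemma HB_deriv_z (t : ℝ) (x y z : ℂ) :
    deriv (fun w => HB t x y w) z =
      8*x*y*z^3 - (x + y + x*y^2 + x^2*y)*(3*z^2+1)*(Real.sqrt (2*t) : ℂ)
        + 2*(4*(t:ℂ)*x*y + x^2 + x^2*y^2 + 1 + y^2)*z := by
  have h2 : (fun w => HB t x y w)
      = (fun w : ℂ => (2*x*y)*w^4 + (-((x + y + x*y^2 + x^2*y)*(Real.sqrt (2*t):ℂ)))*w^3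
          + (4*(t:ℂ)*x*y + x^2 + x^2*y^2 + 1 + y^2)*w^2
          + (-((x + y + x*y^2 + x^2*y)*(Real.sqrt (2*t):ℂ)))*w + (2*x*y)) := by
    funext w; simp only [HB]; ring
  rw [h2, deriv_quartC]; ring

private lemma key_aux (t : ℝ) (ht0 : 0 < t) (ht1 : t < 1)
    (s A B x y z : ℂ) (hs2 : s^2 = 2*(t:ℂ)) (hs0 : s ≠ 0)
    (hA2 : A^2 = (t:ℂ)/2) (hB2 : B^2 = 1 - (t:ℂ)/2) (hsA : s = 2*A)
    (hx0 : x ≠ 0) (hy0 : y ≠ 0) (hz0 : z ≠ 0)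
    (hH : 2*x*y*(z^4+1) - (x+y+x*y^2+x^2*y)*(z^3+z)*s
          + (4*(t:ℂ)*x*y + x^2 + x^2*y^2 + 1 + y^2)*z^2 = 0)
    (hdx : 2*y*(z^4+1) - (1+y^2+2*x*y)*(z^3+z)*s + (4*(t:ℂ)*y + 2*x + 2*x*y^2)*z^2 = 0)
    (hdy : 2*x*(z^4+1) - (1+x^2+2*x*y)*(z^3+z)*s + (4*(t:ℂ)*x + 2*y + 2*x^2*y)*z^2 = 0)
    (hdz : 8*x*y*z^3 - (x+y+x*y^2+x^2*y)*(3*z^2+1)*s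
          + 2*(4*(t:ℂ)*x*y + x^2+x^2*y^2+1+y^2)*z = 0) :
    (x = 1 ∧ y = 1 ∧ z = A + Complex.I*B) ∨ (x = 1 ∧ y = 1 ∧ z = A - Complex.I*B) ∨
    (x = -1 ∧ y = -1 ∧ z = -(A + Complex.I*B)) ∨
    (x = -1 ∧ y = -1 ∧ z = -(A - Complex.I*B)) := by
  have htC1 : (t:ℂ) ≠ 1 := by exact_mod_cast ht1.ne
  have htC0 : (t:ℂ) ≠ 0 := by exact_mod_cast ht0.ne'
  have h2t : (2:ℂ) - 2*(t:ℂ) ≠ 0 := by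
    intro h; exact htC1 (by linear_combination -h/2)
  have h1t : (1:ℂ) - (t:ℂ) ≠ 0 := by
    intro h; exact htC1 (by linear_combination -h)
  have hE1 : (x*y - 1) * (2*z^2*(x*y+1) - s*(z^3+z)*(x+y)) = 0 := by
    linear_combination x*hdx + y*hdy - 2*hH
  have hE2 : (x - y) * (2*z^2*(x+y) - s*(z^3+z)*(1+x*y)) = 0 := by
    linear_combination x*hdx - y*hdy
  have hE3 : (z^2 - 1) * (4*x*y*(z^2+1) - s*(x+y)*(1+x*y)*z) = 0 := by
    linear_combination z*hdz - 2*hH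
  rcases mul_eq_zero.mp hE2 with h2 | h2
  · -- x = y
    have hyx : x = y := by linear_combination h2
    subst hyx
    rcases mul_eq_zero.mp hE1 with h1 | h1
    · -- Case A : x = y, x*y = 1
      have hfx : (x - 1)*(x + 1) = 0 := by linear_combination h1
      rcases mul_eq_zero.mp hfx with h | h
      · have hx1 : x = 1 := by linear_combination h
        subst hx1
        have hq : (z^2 - s*z + 1)^2 = 0 := by linear_combination hH/2 + z^2*hs2
        have hq1 : z^2 - s*z + 1 = 0 := by
          exact pow_eq_zero_iff (two_ne_zero).symm.symm |>.mp hq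
        have hfac : (z - (A + Complex.I*B)) * (z - (A - Complex.I*B)) = 0 := by
          linear_combination hq1 + z*hsA + hA2 + hB2 - B^2*Complex.I_sq
        rcases mul_eq_zero.mp hfac with h' | h'
        · exact Or.inl ⟨rfl, rfl, by linear_combination h'⟩
        · exact Or.inr (Or.inl ⟨rfl, rfl, by linear_combination h'⟩)
      · have hx1 : x = -1 := by linear_combination h
        subst hx1
        have hq : (z^2 + s*z + 1)^2 = 0 := by linear_combination hH/2 + z^2*hs2
        have hq1 : z^2 + s*z + 1 = 0 := by
          exact pow_eq_zero_iff (two_ne_zero).symm.symm |>.mp hq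
        have hfac : (z + (A + Complex.I*B)) * (z + (A - Complex.I*B)) = 0 := by
          linear_combination hq1 - z*hsA + hA2 + hB2 - B^2*Complex.I_sq
        rcases mul_eq_zero.mp hfac with h' | h'
        · refine Or.inr (Or.inr (Or.inl ⟨rfl, rfl, by linear_combination h'⟩))
        · refine Or.inr (Or.inr (Or.inr ⟨rfl, rfl, by linear_combination h'⟩))
    · -- Case B : x = y, G1 = 0
      exfalso
      rcases mul_eq_zero.mp hE3 with h3 | h3
      · -- z^2 = 1
        have hkey : 2*(x^2+1) - 4*s*x*z = 0 := by
          linear_combination h1 + (2*s*x*z - 2*(x^2+1))*h3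
        have hstep : 4*x^2 - 4*s*x*z*(1+x^2) + (x^2+1)^2 + 4*(t:ℂ)*x^2 = 0 := by
          linear_combination hH - (2*x^2*(z^2+1) - 2*s*x*z*(1+x^2) + (x^2+1)^2 + 4*(t:ℂ)*x^2)*h3
        have hfin : (4:ℂ)*(1-(t:ℂ))*x^2 = 0 := by
          linear_combination hstep - ((x^2+1-2*s*x*z)/2)*hkey + 4*x^2*z^2*hs2 + 8*(t:ℂ)*x^2*h3
        exact (mul_ne_zero (mul_ne_zero (by norm_num) h1t) (pow_ne_zero 2 hx0)) hfin
      · -- G3 = 0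
        have hG3p : 2*x*(z^2+1) - s*(1+x^2)*z = 0 := by
          have h' : (2*x) * (2*x*(z^2+1) - s*(1+x^2)*z) = (2*x) * 0 := by
            rw [mul_zero]; linear_combination h3
          exact mul_left_cancel₀ (mul_ne_zero two_ne_zero hx0) h'
        have hG1p : z*(x^2+1) - s*x*(z^2+1) = 0 := by
          have h' : (2*z) * (z*(x^2+1) - s*x*(z^2+1)) = (2*z) * 0 := by
            rw [mul_zero]; linear_combination h1
          exact mul_left_cancel₀ (mul_ne_zero two_ne_zero hz0) h'
        have hv : ((2:ℂ) - 2*(t:ℂ))*(z*(x^2+1)) = 0 := by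
          linear_combination s*hG3p + 2*hG1p + z*(x^2+1)*hs2
        have hx2 : x^2 + 1 = 0 :=
          (mul_eq_zero.mp ((mul_eq_zero.mp hv).resolve_left h2t)).resolve_left hz0
        have hsz : s*(x*(z^2+1)) = 0 := by linear_combination -hG1p + z*hx2
        have hz2 : z^2 + 1 = 0 :=
          (mul_eq_zero.mp ((mul_eq_zero.mp hsz).resolve_left hs0)).resolve_left hx0
        have hfin : 4*(t:ℂ) - 4 = 0 := by
          linear_combination hH
            - (2*((z^2+1)^2 - 2*(z^2+1) + 2) + (4*(t:ℂ) + (x^2+1))*((z^2+1) - 1)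
                - 2*s*x*z*(z^2+1))*hx2
            - (-2*(z^2+1) + 4 - 4*(t:ℂ))*hz2
        exact htC1 (by linear_combination hfin/4)
  · rcases mul_eq_zero.mp hE1 with h1 | h1
    · -- Case C : G2 = 0, x*y = 1
      exfalso
      have hC1 : z^2*(x+y) - s*(z^3+z) = 0 := by
        linear_combination h2/2 + (s*(z^3+z)/2)*h1
      rcases mul_eq_zero.mp hE3 with h3 | h3
      · have hu : (x+y) - 2*s*z = 0 := by
          linear_combination hC1 + (s*z - (x+y))*h3
        have hstep : (4:ℂ) - 4*s*z*(x+y) + 4*(t:ℂ) + (x+y)^2 = 0 := by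
          linear_combination hH - (2*(z^4+1) - s*(x+y)*z*(z^2+1) + 4*(t:ℂ) + (x*y-1))*h1
            - (2*(z^2+1) - 2*s*(x+y)*z + 4*(t:ℂ)*(x*y-1) + 4*(t:ℂ) + (x+y)^2 + (x*y-1)^2)*h3
        have hfin : (4:ℂ) - 4*(t:ℂ) = 0 := by
          linear_combination hstep - ((x+y) - 2*s*z)*hu + 4*z^2*hs2 + 8*(t:ℂ)*h3
        exact htC1 (by linear_combination -hfin/4)
      · have hC2 : 2*(z^2+1) - s*(x+y)*z = 0 := by
          linear_combination h3/2 + (s*(x+y)*z/2 - 2*(z^2+1))*h1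
        have hC1p : z*(x+y) - s*(z^2+1) = 0 := by
          have h' : z * (z*(x+y) - s*(z^2+1)) = z * 0 := by
            rw [mul_zero]; linear_combination hC1
          exact mul_left_cancel₀ hz0 h'
        have hw : ((2:ℂ) - 2*(t:ℂ))*(z^2+1) = 0 := by
          linear_combination s*hC1p + hC2 + (z^2+1)*hs2
        have hz2 : z^2 + 1 = 0 := (mul_eq_zero.mp hw).resolve_left h2t
        have hsu : s*((x+y)*z) = 0 := by linear_combination -hC2 + 2*hz2
        have hu0 : x + y = 0 :=
          (mul_eq_zero.mp ((mul_eq_zero.mp hsu).resolve_left hs0)).resolve_right hz0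
        have hfin : (4:ℂ) - 4*(t:ℂ) = 0 := by
          linear_combination hH - (2*(z^4+1) + (4*(t:ℂ) + (x*y-1))*z^2)*h1
            - (2*(z^2-1) + 4*(t:ℂ))*hz2
            - (-(s*z*(z^2+1)*(x*y+1)) + (x+y)*z^2)*hu0
        exact htC1 (by linear_combination -hfin/4)
    · -- Case D : G2 = 0, G1 = 0
      exfalso
      have hS : (1+x)*(1+y)*(2*z^2 - s*(z^3+z)) = 0 := by linear_combination h2 + h1
      have hD : (x-1)*(y-1)*(2*z^2 + s*(z^3+z)) = 0 := by linear_combination h1 - h2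
      rcases mul_eq_zero.mp hS with hS' | hSz
      · rcases mul_eq_zero.mp hS' with hX | hY
        · -- x = -1
          have hxm : x = -1 := by linear_combination hX
          subst hxm
          rcases mul_eq_zero.mp hD with hD' | hDz
          · rcases mul_eq_zero.mp hD' with hX1 | hY1
            · norm_num at hX1
            · have hy1 : y = 1 := by linear_combination hY1
              subst hy1
              rcases mul_eq_zero.mp hE3 with h3 | h3
              · exact htC0 (by linear_combination (-1/4 : ℂ)*hH - ((2*(z^2-1)+4*(t:ℂ))/4)*h3)
              · have hz2 : z^2 + 1 = 0 := by linear_combination (-1/4 : ℂ)*h3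
                have h0 : (4:ℂ)*(t:ℂ) - 8 = 0 := by
                  linear_combination hH + (2*(z^2+1) - 8 + 4*(t:ℂ))*hz2
                have ht2 : t = 2 := by
                  exact_mod_cast (show (t:ℂ) = 2 by linear_combination h0/4)
                linarith
          · -- case 3 : x = -1, 2z^2 + s(z^3+z) = 0
            have hr : 2*z + s*(z^2+1) = 0 := by
              have h' : z * (2*z + s*(z^2+1)) = z * 0 := by
                rw [mul_zero]; linear_combination hDz
              exact mul_left_cancel₀ hz0 h'
            have hA' : y*((z^2+1)^2 - (4-2*(t:ℂ))*z^2) = 0 := by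
              linear_combination (-1/2 : ℂ)*hH + ((y-1)^2*z/2)*hr
            have hB' : (z^2+1)^2 - (4-2*(t:ℂ))*z^2 = 0 :=
              (mul_eq_zero.mp hA').resolve_left hy0
            have hr2 : 2*(t:ℂ)*(z^2+1)^2 - 4*z^2 = 0 := by
              linear_combination (s*(z^2+1) - 2*z)*hr - (z^2+1)^2*hs2
            have hfin : (4:ℂ)*((t:ℂ)-1)^2*z^2 = 0 := by
              linear_combination 2*(t:ℂ)*hB' - hr2
            exact (mul_ne_zero (mul_ne_zero (by norm_num)
              (pow_ne_zero 2 (sub_ne_zero.mpr htC1))) (pow_ne_zero 2 hz0)) hfin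
        · -- y = -1
          have hym : y = -1 := by linear_combination hY
          subst hym
          rcases mul_eq_zero.mp hD with hD' | hDz
          · rcases mul_eq_zero.mp hD' with hX1 | hY1
            · have hx1 : x = 1 := by linear_combination hX1
              subst hx1
              rcases mul_eq_zero.mp hE3 with h3 | h3
              · exact htC0 (by linear_combination (-1/4 : ℂ)*hH - ((2*(z^2-1)+4*(t:ℂ))/4)*h3)
              · have hz2 : z^2 + 1 = 0 := by linear_combination (-1/4 : ℂ)*h3
                have h0 : (4:ℂ)*(t:ℂ) - 8 = 0 := by
                  linear_combination hH + (2*(z^2+1) - 8 + 4*(t:ℂ))*hz2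
                have ht2 : t = 2 := by
                  exact_mod_cast (show (t:ℂ) = 2 by linear_combination h0/4)
                linarith
            · norm_num at hY1
          · -- case 6 : y = -1, 2z^2 + s(z^3+z) = 0
            have hr : 2*z + s*(z^2+1) = 0 := by
              have h' : z * (2*z + s*(z^2+1)) = z * 0 := by
                rw [mul_zero]; linear_combination hDz
              exact mul_left_cancel₀ hz0 h'
            have hA' : x*((z^2+1)^2 - (4-2*(t:ℂ))*z^2) = 0 := by
              linear_combination (-1/2 : ℂ)*hH + ((x-1)^2*z/2)*hr
            have hB' : (z^2+1)^2 - (4-2*(t:ℂ))*z^2 = 0 :=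
              (mul_eq_zero.mp hA').resolve_left hx0
            have hr2 : 2*(t:ℂ)*(z^2+1)^2 - 4*z^2 = 0 := by
              linear_combination (s*(z^2+1) - 2*z)*hr - (z^2+1)^2*hs2
            have hfin : (4:ℂ)*((t:ℂ)-1)^2*z^2 = 0 := by
              linear_combination 2*(t:ℂ)*hB' - hr2
            exact (mul_ne_zero (mul_ne_zero (by norm_num)
              (pow_ne_zero 2 (sub_ne_zero.mpr htC1))) (pow_ne_zero 2 hz0)) hfin
      · rcases mul_eq_zero.mp hD with hD' | hDz
        · rcases mul_eq_zero.mp hD' with hX1 | hY1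
          · -- case 7 : x = 1, 2z^2 - s(z^3+z) = 0
            have hx1 : x = 1 := by linear_combination hX1
            subst hx1
            have hr : 2*z - s*(z^2+1) = 0 := by
              have h' : z * (2*z - s*(z^2+1)) = z * 0 := by
                rw [mul_zero]; linear_combination hSz
              exact mul_left_cancel₀ hz0 h'
            have hA' : y*((z^2+1)^2 - (4-2*(t:ℂ))*z^2) = 0 := by
              linear_combination hH/2 - ((1+y)^2*z/2)*hr
            have hB' : (z^2+1)^2 - (4-2*(t:ℂ))*z^2 = 0 :=
              (mul_eq_zero.mp hA').resolve_left hy0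
            have hr2 : 2*(t:ℂ)*(z^2+1)^2 - 4*z^2 = 0 := by
              linear_combination (-(s*(z^2+1) + 2*z))*hr - (z^2+1)^2*hs2
            have hfin : (4:ℂ)*((t:ℂ)-1)^2*z^2 = 0 := by
              linear_combination 2*(t:ℂ)*hB' - hr2
            exact (mul_ne_zero (mul_ne_zero (by norm_num)
              (pow_ne_zero 2 (sub_ne_zero.mpr htC1))) (pow_ne_zero 2 hz0)) hfin
          · -- case 8 : y = 1, 2z^2 - s(z^3+z) = 0
            have hy1 : y = 1 := by linear_combination hY1
            subst hy1
            have hr : 2*z - s*(z^2+1) = 0 := by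
              have h' : z * (2*z - s*(z^2+1)) = z * 0 := by
                rw [mul_zero]; linear_combination hSz
              exact mul_left_cancel₀ hz0 h'
            have hA' : x*((z^2+1)^2 - (4-2*(t:ℂ))*z^2) = 0 := by
              linear_combination hH/2 - ((1+x)^2*z/2)*hr
            have hB' : (z^2+1)^2 - (4-2*(t:ℂ))*z^2 = 0 :=
              (mul_eq_zero.mp hA').resolve_left hx0
            have hr2 : 2*(t:ℂ)*(z^2+1)^2 - 4*z^2 = 0 := by
              linear_combination (-(s*(z^2+1) + 2*z))*hr - (z^2+1)^2*hs2
            have hfin : (4:ℂ)*((t:ℂ)-1)^2*z^2 = 0 := by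
              linear_combination 2*(t:ℂ)*hB' - hr2
            exact (mul_ne_zero (mul_ne_zero (by norm_num)
              (pow_ne_zero 2 (sub_ne_zero.mpr htC1))) (pow_ne_zero 2 hz0)) hfin
        · -- case 9
          have h0 : (4:ℂ)*z^2 = 0 := by linear_combination hSz + hDz
          exact (mul_ne_zero (by norm_num : (4:ℂ) ≠ 0) (pow_ne_zero 2 hz0)) h0

private lemma HB_point_pos (t : ℝ) (ht0 : 0 ≤ t) (Z : ℂ)
    (hq : Z^2 - (Real.sqrt (2*t) : ℂ)*Z + 1 = 0) :
    HB t 1 1 Z = 0 ∧ deriv (fun w => HB t w 1 Z) 1 = 0 ∧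
      deriv (fun w => HB t 1 w Z) 1 = 0 ∧ deriv (fun w => HB t 1 1 w) Z = 0 := by
  have hs2 : ((Real.sqrt (2*t)) : ℂ)^2 = 2*(t:ℂ) := by
    rw [← Complex.ofReal_pow, Real.sq_sqrt (by linarith : (0:ℝ) ≤ 2*t)]
    push_cast; ring
  refine ⟨?_, ?_, ?_, ?_⟩
  · simp only [HB]
    linear_combination (2*(Z^2 - (Real.sqrt (2*t):ℂ)*Z + 1))*hq - 2*Z^2*hs2
  · rw [HB_deriv_x]
    linear_combination (2*(Z^2 - (Real.sqrt (2*t):ℂ)*Z + 1))*hq - 2*Z^2*hs2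
  · rw [HB_deriv_y]
    linear_combination (2*(Z^2 - (Real.sqrt (2*t):ℂ)*Z + 1))*hq - 2*Z^2*hs2
  · rw [HB_deriv_z]
    linear_combination (8*Z - 4*(Real.sqrt (2*t):ℂ))*hq - 4*Z*hs2

private lemma HB_point_neg (t : ℝ) (ht0 : 0 ≤ t) (Z : ℂ)
    (hq : Z^2 + (Real.sqrt (2*t) : ℂ)*Z + 1 = 0) :
    HB t (-1) (-1) Z = 0 ∧ deriv (fun w => HB t w (-1) Z) (-1) = 0 ∧
      deriv (fun w => HB t (-1) w Z) (-1) = 0 ∧ deriv (fun w => HB t (-1) (-1) w) Z = 0 := by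
  have hs2 : ((Real.sqrt (2*t)) : ℂ)^2 = 2*(t:ℂ) := by
    rw [← Complex.ofReal_pow, Real.sq_sqrt (by linarith : (0:ℝ) ≤ 2*t)]
    push_cast; ring
  refine ⟨?_, ?_, ?_, ?_⟩
  · simp only [HB]
    linear_combination (2*(Z^2 + (Real.sqrt (2*t):ℂ)*Z + 1))*hq - 2*Z^2*hs2
  · rw [HB_deriv_x]
    linear_combination (-2*(Z^2 + (Real.sqrt (2*t):ℂ)*Z + 1))*hq + 2*Z^2*hs2
  · rw [HB_deriv_y]
    linear_combination (-2*(Z^2 + (Real.sqrt (2*t):ℂ)*Z + 1))*hq + 2*Z^2*hs2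
  · rw [HB_deriv_z]
    linear_combination (8*Z + 4*(Real.sqrt (2*t):ℂ))*hq - 4*Z*hs2

/-- for 0 < t < 1, the common zero set on the unit torus of H and ∇H for
the B(t) walk consists of exactly the four points
(x,y,z) = ±(1, 1, √(t/2) ± i√(1−t/2)). -/
theorem Bt_singular_points (t : ℝ) (ht0 : 0 < t) (ht1 : t < 1)
    (x y z : ℂ) (hx : ‖x‖ = 1) (hy : ‖y‖ = 1) (hz : ‖z‖ = 1) :
    (HB t x y z = 0 ∧ deriv (fun w => HB t w y z) x = 0 ∧
        deriv (fun w => HB t x w z) y = 0 ∧ deriv (fun w => HB t x y w) z = 0) ↔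
      ((x = 1 ∧ y = 1 ∧
          z = (Real.sqrt (t / 2) : ℂ) + Complex.I * (Real.sqrt (1 - t / 2) : ℂ)) ∨
        (x = 1 ∧ y = 1 ∧
          z = (Real.sqrt (t / 2) : ℂ) - Complex.I * (Real.sqrt (1 - t / 2) : ℂ)) ∨
        (x = -1 ∧ y = -1 ∧
          z = -((Real.sqrt (t / 2) : ℂ) + Complex.I * (Real.sqrt (1 - t / 2) : ℂ))) ∨
        (x = -1 ∧ y = -1 ∧
          z = -((Real.sqrt (t / 2) : ℂ) - Complex.I * (Real.sqrt (1 - t / 2) : ℂ)))) := by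
  have hx0 : x ≠ 0 := by intro h; rw [h] at hx; norm_num at hx
  have hy0 : y ≠ 0 := by intro h; rw [h] at hy; norm_num at hy
  have hz0 : z ≠ 0 := by intro h; rw [h] at hz; norm_num at hz
  have hs2 : ((Real.sqrt (2*t)) : ℂ)^2 = 2*(t:ℂ) := by
    rw [← Complex.ofReal_pow, Real.sq_sqrt (by linarith : (0:ℝ) ≤ 2*t)]
    push_cast; ring
  have hs0 : ((Real.sqrt (2*t)) : ℂ) ≠ 0 :=
    Complex.ofReal_ne_zero.mpr (ne_of_gt (Real.sqrt_pos.mpr (by linarith)))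
  have hA2 : ((Real.sqrt (t/2)) : ℂ)^2 = (t:ℂ)/2 := by
    rw [← Complex.ofReal_pow, Real.sq_sqrt (by linarith : (0:ℝ) ≤ t/2)]
    push_cast; ring
  have hB2 : ((Real.sqrt (1 - t/2)) : ℂ)^2 = 1 - (t:ℂ)/2 := by
    rw [← Complex.ofReal_pow, Real.sq_sqrt (by linarith : (0:ℝ) ≤ 1 - t/2)]
    push_cast; ring
  have hsar : Real.sqrt (2*t) = 2*Real.sqrt (t/2) := by
    rw [show (2:ℝ)*t = 2^2*(t/2) by ring,
      Real.sqrt_mul (by norm_num : (0:ℝ) ≤ 2^2) (t/2),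
      Real.sqrt_sq (by norm_num : (0:ℝ) ≤ 2)]
  have hsA : ((Real.sqrt (2*t)) : ℂ) = 2*((Real.sqrt (t/2)) : ℂ) := by
    rw [hsar]; push_cast; ring
  constructor
  · rintro ⟨hH, hdx, hdy, hdz⟩
    simp only [HB] at hH
    rw [HB_deriv_x] at hdx
    rw [HB_deriv_y] at hdy
    rw [HB_deriv_z] at hdz
    exact key_aux t ht0 ht1 ((Real.sqrt (2*t)) : ℂ) ((Real.sqrt (t/2)) : ℂ)
      ((Real.sqrt (1 - t/2)) : ℂ) x y z hs2 hs0 hA2 hB2 hsA hx0 hy0 hz0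
      (by linear_combination hH) (by linear_combination hdx)
      (by linear_combination hdy) (by linear_combination hdz)
  · rintro (⟨hx1, hy1, hz1⟩ | ⟨hx1, hy1, hz1⟩ | ⟨hx1, hy1, hz1⟩ | ⟨hx1, hy1, hz1⟩) <;>
      subst hx1 <;> subst hy1 <;> subst hz1
    · exact HB_point_pos t ht0.le _ (by
        linear_combination -hA2 - hB2 + ((Real.sqrt (1 - t/2)) : ℂ)^2*Complex.I_sq
          - (((Real.sqrt (t/2)) : ℂ) + Complex.I*((Real.sqrt (1 - t/2)) : ℂ))*hsA)
    · exact HB_point_pos t ht0.le _ (by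
        linear_combination -hA2 - hB2 + ((Real.sqrt (1 - t/2)) : ℂ)^2*Complex.I_sq
          - (((Real.sqrt (t/2)) : ℂ) - Complex.I*((Real.sqrt (1 - t/2)) : ℂ))*hsA)
    · exact HB_point_neg t ht0.le _ (by
        linear_combination -hA2 - hB2 + ((Real.sqrt (1 - t/2)) : ℂ)^2*Complex.I_sq
          - (((Real.sqrt (t/2)) : ℂ) + Complex.I*((Real.sqrt (1 - t/2)) : ℂ))*hsA)
    · exact HB_point_neg t ht0.le _ (by
        linear_combination -hA2 - hB2 + ((Real.sqrt (1 - t/2)) : ℂ)^2*Complex.I_sq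
          - (((Real.sqrt (t/2)) : ℂ) - Complex.I*((Real.sqrt (1 - t/2)) : ℂ))*hsA)
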